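/- Let A = (a_i)_{i=1}^m be a (0,1)-vector and let N_A denote the number of entries of A equal to 1. Let k be a positive integer with k ≤ m. If (m/k)·(N_A·e/m)^k < 1, then there exists a permutation π of [m] such that for every s ∈ [⌊m/k⌋], the vector B_s(π) contains at least one zero entry. -/

import Mathlib

/-- **Vector version of the good-permutation lemma** (Lemma 6 of the paper).
`A : Fin m → Bool` is a (0,1)-vector (1 ↔ `true`); blocks are indexed with
`s < m / k` (0-indexed), block `s` consisting of entries `s*k, …, s*k + k - 1`
of the permuted vector. -/
theorem vector_good_permutation (m k : ℕ) (hk : 0 < k) (hkm : k ≤ m)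
    (A : Fin m → Bool)
    (hlt : ((m : ℝ) / (k : ℝ)) *
        (((Nat.card {i : Fin m // A i = true} : ℝ) * Real.exp 1) / m) ^ k < 1) :
    ∃ π : Equiv.Perm (Fin m),
      ∀ s : ℕ, s < m / k →
        ∃ i : Fin m, s * k ≤ i.val ∧ i.val < (s + 1) * k ∧ A (π i) = false := by
  classical
  set N : ℕ := Nat.card {i : Fin m // A i = true} with hN
  set q : ℕ := m / k with hqdef
  have hm0 : 0 < m := lt_of_lt_of_le hk hkm
  have hq1 : 1 ≤ q := (Nat.one_le_div_iff hk).mpr hkm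
  have hqk : q * k ≤ m := Nat.div_mul_le_self m k
  have hqkR : (q : ℝ) ≤ (m : ℝ) / k := by
    rw [le_div_iff₀ (by exact_mod_cast hk)]
    exact_mod_cast hqk
  have he : (2 : ℝ) < Real.exp 1 := by
    have := Real.add_one_lt_exp (x := 1) one_ne_zero
    linarith
  -- Key counting fact: N + q ≤ m
  have hNq : N + q ≤ m := by
    by_contra h
    push_neg at h
    have hmR : (m : ℝ) + 1 ≤ (N : ℝ) + q := by exact_mod_cast h
    have hmpos : (0 : ℝ) < m := by exact_mod_cast hm0
    rcases eq_or_lt_of_le (show 1 ≤ k from hk) with hk1 | hk2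
    · -- k = 1
      have hk1' : k = 1 := hk1.symm
      subst hk1'
      have hqm : q = m := by simp [hqdef]
      have hN1 : (1 : ℝ) ≤ N := by rw [hqm] at hmR; linarith
      push_cast at hlt
      rw [pow_one, div_one, mul_comm, div_mul_cancel₀ _ hmpos.ne'] at hlt
      nlinarith [Real.exp_pos 1]
    · -- 2 ≤ k
      have hk2' : (2 : ℝ) ≤ k := by exact_mod_cast hk2
      have hmk2 : (m : ℝ) / k ≤ m / 2 := by
        apply div_le_div_of_nonneg_left (le_of_lt hmpos) (by norm_num) hk2'
      have hNhalf : (m : ℝ) / 2 < N := by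
        have : (m : ℝ) - (m / k) < N := by linarith
        linarith
      have hx1 : (1 : ℝ) < (N : ℝ) * Real.exp 1 / m := by
        rw [lt_div_iff₀ hmpos]
        nlinarith [Real.exp_pos 1]
      have hxk : (1 : ℝ) ≤ ((N : ℝ) * Real.exp 1 / m) ^ k := by
        exact one_le_pow₀ (le_of_lt hx1)
      have hmk1 : (1 : ℝ) ≤ (m : ℝ) / k := by
        rw [le_div_iff₀ (by positivity)]
        simpa using (show (k : ℝ) ≤ m by exact_mod_cast hkm)
      nlinarith
  -- the set of false positions has at least q elements
  have hNcard : N = (Finset.univ.filter (fun i => A i = true)).card := by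
    rw [hN, Nat.card_eq_fintype_card, Fintype.card_subtype]
  have hfalse : q ≤ (Finset.univ.filter (fun i => A i = false)).card := by
    have hsplit : (Finset.univ.filter (fun i => A i = true)).card +
        (Finset.univ.filter (fun i => A i = false)).card = m := by
      have := Finset.card_filter_add_card_filter_not
        (s := (Finset.univ : Finset (Fin m))) (p := fun i => A i = true)
      simpa [Bool.not_eq_true, Fintype.card_fin] using this
    omega
  obtain ⟨T, hTsub, hTcard⟩ :=
    Finset.exists_subset_card_eq hfalse
  -- positions s*k for s < q
  have hlt' : ∀ s : ℕ, s < q → s * k < m := fun s hs =>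
    lt_of_lt_of_le ((Nat.mul_lt_mul_right hk).mpr hs) hqk
  set f : Fin q → Fin m := fun s => ⟨s.val * k, hlt' s.val s.isLt⟩ with hf
  have hfinj : Function.Injective f := by
    intro a b hab
    have : a.val * k = b.val * k := congrArg Fin.val hab
    exact Fin.ext (Nat.eq_of_mul_eq_mul_right hk this)
  set S : Finset (Fin m) := Finset.image f Finset.univ with hS
  have hScard : S.card = q := by
    rw [hS, Finset.card_image_of_injective _ hfinj, Finset.card_univ, Fintype.card_fin]
  have hcardEq : Fintype.card {x : Fin m // x ∈ S} = Fintype.card {x : Fin m // x ∈ T} := by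
    simp [Fintype.card_coe, hScard, hTcard]
  let e : {x : Fin m // x ∈ S} ≃ {x : Fin m // x ∈ T} := Fintype.equivOfCardEq hcardEq
  refine ⟨e.extendSubtype, ?_⟩
  intro s hs
  refine ⟨⟨s * k, hlt' s hs⟩, le_refl _, ?_, ?_⟩
  · simp [Nat.succ_mul]
    omega
  · have hmem : (⟨s * k, hlt' s hs⟩ : Fin m) ∈ S := by
      rw [hS]
      exact Finset.mem_image.mpr ⟨⟨s, hs⟩, Finset.mem_univ _, rfl⟩
    have := e.extendSubtype_mem ⟨s * k, hlt' s hs⟩ hmem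
    have := hTsub this
    simpa using this
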